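/- In the average-rule SDHT, at any time t+1 at which case one holds for a good agent i ∈ G and a hypothesis θ ∈ Θ (so that the pairwise disjoint sets ℒ^θ_{i,t+1}, ℋ^θ_{i,t+1}, ℳ^θ_{i,t+1} partitioning N_{i,t+1} are defined), the following holds: for every agent j ∈ ℳ^θ_{i,t+1} and every hypothesis θ' ≠ θ, there exist a good agent j' ∈ N_{i,t+1} with b^a_{j',t}(θ) ≤ b^a_{j,t}(θ) and a good agent j'' ∈ N_{i,t+1} ∩ S(θ,θ') with b^a_{j,t}(θ) ≤ b^a_{j'',t}(θ). -/
import Mathlib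


/-- **Sandwich lemma for the average-rule SDHT (Lemma 3).** At any time at which case one holds
for a good agent `i ∈ G` and a hypothesis `θ` (with neighbor set `N = N_{i,t+1}` of which at most
`f` members are bad, shared values `v j = b^a_{j,t}(θ)`, and the pairwise disjoint sets
`L = ℒ^θ_{i,t+1}`, `H = ℋ^θ_{i,t+1}`, `M = N \ (L ∪ H) = ℳ^θ_{i,t+1}` partitioning `N`),
for every agent `j ∈ M` and every hypothesis `θ' ≠ θ`, there exist a good agent `j' ∈ N` with
`v j' ≤ v j` and a good agent `j'' ∈ N ∩ S(θ,θ')` with `v j ≤ v j''`. -/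
theorem avg_sdht_sandwich {𝒩 : Type*} [Fintype 𝒩] [DecidableEq 𝒩]
    (G : Finset 𝒩) (f : ℕ)
    {Θ : Type*} [Fintype Θ] [Nonempty Θ]
    (Spair : Θ → Θ → Set 𝒩) (θ : Θ)
    (i : 𝒩) (hi : i ∈ G)
    (N : Finset 𝒩)
    (hbad : ((N : Set 𝒩) \ (G : Set 𝒩)).ncard ≤ f)
    (v : 𝒩 → ℝ) (hv : ∀ j, v j ∈ Set.Icc (0 : ℝ) 1)
    (hcase1 : ∀ θ' ≠ θ, 2 * f + 2 ≤ (Spair θ θ' ∩ (N : Set 𝒩)).ncard)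
    (L : Finset 𝒩) (hL_sub : L ⊆ N) (hL_card : L.card = f)
    (hL_low : ∀ l ∈ L, ∀ j ∈ N \ L, v l ≤ v j)
    (H : Finset 𝒩) (hH_sub : H ⊆ N \ L)
    (hH_high : ∀ h ∈ H, ∀ j ∈ N \ (L ∪ H), v j ≤ v h)
    (hH_cover : ∀ θ' ≠ θ, f + 1 ≤ ((H : Set 𝒩) ∩ Spair θ θ').ncard)
    (hH_min : ∀ H' ⊆ N \ L,
      ((∀ h ∈ H', ∀ j ∈ N \ (L ∪ H'), v j ≤ v h) ∧
        (∀ θ' ≠ θ, f + 1 ≤ ((H' : Set 𝒩) ∩ Spair θ θ').ncard)) →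
      H.card ≤ H'.card) :
    ∀ j ∈ N \ (L ∪ H), ∀ θ' ≠ θ,
      (∃ j' ∈ N, j' ∈ G ∧ v j' ≤ v j) ∧
      (∃ j'' ∈ N, j'' ∈ G ∧ j'' ∈ Spair θ θ' ∧ v j ≤ v j'') := by
  intro j hj θ' hθ'
  have hjN : j ∈ N := (Finset.mem_sdiff.mp hj).1
  have hjLH : j ∉ L ∪ H := (Finset.mem_sdiff.mp hj).2
  have hjL : j ∉ L := fun h => hjLH (Finset.mem_union_left _ h)
  constructor
  · by_contra hcon
    push_neg at hcon
    have hsub : ((insert j L : Finset 𝒩) : Set 𝒩) ⊆ (N : Set 𝒩) \ (G : Set 𝒩) := by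
      intro x hx
      simp only [Finset.coe_insert, Set.mem_insert_iff, Finset.mem_coe] at hx
      rcases hx with rfl | hx
      · exact ⟨hjN, fun hg => absurd le_rfl (not_le.mpr (hcon x hjN hg))⟩
      · have hxN := hL_sub hx
        refine ⟨hxN, fun hg => ?_⟩
        have := hL_low x hx j (Finset.mem_sdiff.mpr ⟨hjN, hjL⟩)
        exact absurd this (not_le.mpr (hcon x hxN hg))
    have hle := Set.ncard_le_ncard hsub (Set.toFinite _)
    rw [Set.ncard_coe_finset, Finset.card_insert_of_notMem hjL, hL_card] at hle
    omega
  · by_contra hcon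
    push_neg at hcon
    have hsub : (H : Set 𝒩) ∩ Spair θ θ' ⊆ (N : Set 𝒩) \ (G : Set 𝒩) := by
      rintro x ⟨hxH, hxS⟩
      have hxN : x ∈ N := (Finset.mem_sdiff.mp (hH_sub hxH)).1
      refine ⟨hxN, fun hg => ?_⟩
      exact absurd (hH_high x hxH j hj) (not_le.mpr (hcon x hxN hg hxS))
    have hle := Set.ncard_le_ncard hsub (Set.toFinite _)
    have h1 := hH_cover θ' hθ'
    omega
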